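/- Define the sequence of functions p_k(u) for u ∈ [0,1] by (exp(2*pi*b)-1)*p_1(u) = 1 and, for k > 1, (exp(2*pi*b)-1)*p_k(u) = (1-u)^(k-1)/(k-1)! + Σ_{j=1}^{k-1} p_j(u)/(k-j)!, where b is a complex number with exp(2*pi*b) ≠ 1. Then the exponential generating function p(x) = Σ_{k≥1} p_k(u)*x^k satisfies p(x) = -x*exp((1-u)*x)/(exp(x) - exp(2*pi*b)) as formal power series in x. -/

import Mathlib

open PowerSeries in
theorem generating_function_p (b : ℂ) (hb : Complex.exp (2 * (Real.pi : ℂ) * b) ≠ 1)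
    (u : ℝ) (hu : u ∈ Set.Icc (0 : ℝ) 1) (p : ℕ → ℂ)
    (h1 : (Complex.exp (2 * (Real.pi : ℂ) * b) - 1) * p 1 = 1)
    (hk : ∀ k : ℕ, 1 < k →
      (Complex.exp (2 * (Real.pi : ℂ) * b) - 1) * p k =
        ((1 : ℂ) - (u : ℂ)) ^ (k - 1) / ((k - 1).factorial : ℂ) +
          ∑ j ∈ Finset.Icc 1 (k - 1), p j / ((k - j).factorial : ℂ)) :
    PowerSeries.mk (fun k => if k = 0 then 0 else p k) =
      -(PowerSeries.X * PowerSeries.rescale ((1 : ℂ) - (u : ℂ)) (PowerSeries.exp ℂ)) *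
        (PowerSeries.exp ℂ - PowerSeries.C (R := ℂ) (Complex.exp (2 * (Real.pi : ℂ) * b)))⁻¹ := by
  set e := Complex.exp (2 * (Real.pi : ℂ) * b) with he
  set a := (1 : ℂ) - (u : ℂ) with ha
  have hcc : constantCoeff (exp ℂ - C e) ≠ 0 := by
    simp only [map_sub, constantCoeff_exp, constantCoeff_C]
    exact sub_ne_zero.mpr (fun h => hb h.symm)
  rw [PowerSeries.eq_mul_inv_iff_mul_eq hcc]
  ext n
  have hcexp : ∀ j : ℕ, (coeff j) (exp ℂ) = 1 / (j.factorial : ℂ) := by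
    intro j
    rw [coeff_exp]
    push_cast [map_div₀]
    simp
  rw [PowerSeries.coeff_mul, Finset.Nat.sum_antidiagonal_eq_sum_range_succ_mk]
  simp only [coeff_mk]
  match n with
  | 0 =>
    simp
  | 1 =>
    have : (e - 1) * p 1 = 1 := h1
    simp only [Finset.sum_range_succ, Finset.sum_range_zero]
    simp only [map_sub, hcexp, coeff_rescale]
    simp only [coeff_C]
    norm_num
    linear_combination -this
  | (m+2) =>
    have h1n : 1 < m + 2 := by omega
    have key := hk (m+2) h1n
    simp only [show m + 2 - 1 = m + 1 from rfl] at key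
    have hsplit : ∑ i ∈ Finset.range (m+2+1),
        (if i = 0 then 0 else p i) * (coeff (m+2 - i)) (exp ℂ - C e)
        = (∑ j ∈ Finset.Icc 1 (m+1), p j / ((m+2 - j).factorial : ℂ)) + p (m+2) * (1 - e) := by
      rw [Finset.range_eq_Ico, show Finset.Ico 0 (m+2+1) = Finset.Icc 0 (m+2) by rw [Finset.Ico_add_one_right_eq_Icc]]
      rw [← Finset.sum_subset (Finset.Icc_subset_Icc_left (by omega) : Finset.Icc 1 (m+2) ⊆ Finset.Icc 0 (m+2))
        (by intro x hx hx'; simp at hx hx' ⊢; intro h1x; omega)]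
      have hins : Finset.Icc 1 (m+2) = insert (m+2) (Finset.Icc 1 (m+1)) := by
        ext x; simp [Finset.mem_Icc, Finset.mem_insert]; omega
      rw [hins, Finset.sum_insert (by simp), add_comm]
      congr 1
      · apply Finset.sum_congr rfl
        intro j hj
        simp only [Finset.mem_Icc] at hj
        have hj0 : j ≠ 0 := by omega
        have hnj : m + 2 - j ≠ 0 := by omega
        simp only [hj0, if_false, map_sub, hcexp, coeff_C, hnj]
        ring
      · simp only [map_sub, hcexp, coeff_C, Nat.sub_self, Nat.factorial_zero, if_pos rfl]
        push_cast
        ring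
    rw [hsplit]
    have hrhs : (coeff (m+2)) (-(X * rescale a (exp ℂ)))
        = -(a ^ (m+1) / ((m+1).factorial : ℂ)) := by
      rw [map_neg, show (coeff (m+2)) (X * rescale a (exp ℂ)) = (coeff (m+1+1)) (X * rescale a (exp ℂ)) from rfl,
        coeff_succ_X_mul, coeff_rescale, hcexp]
      ring
    rw [hrhs]
    linear_combination -key
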